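/- Performance difference lemma: for any two policies $\pi, \pi'$ of a finite discounted MDP with discount $\gamma \in (0,1)$, and any state $s$, $V^{\pi'}(s) - V^{\pi}(s) = \frac{1}{1-\gamma} \mathbb{E}_{s' \sim d_s^{\pi'}}\left[\langle Q^{\pi}(s', \cdot), \pi'(\cdot|s') - \pi(\cdot|s')\rangle\right]$. -/

import Mathlib

open Finset

/-- `t`-step transition probabilities of a finite Markov chain with kernel `K`. -/
noncomputable def kpow {S : Type*} [Fintype S] [DecidableEq S]
    (K : S → S → ℝ) : ℕ → S → S → ℝ
  | 0, s0, s' => if s0 = s' then 1 else 0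
  | t + 1, s0, s' => ∑ u, K s0 u * kpow K t u s'

/-- State transition kernel induced by a policy. -/
noncomputable def stateKer {S A : Type*} [Fintype A]
    (Pk : S → A → S → ℝ) (π : S → A → ℝ) : S → S → ℝ :=
  fun s s' => ∑ a, π s a * Pk s a s'

/-- Value function of a policy. -/
noncomputable def Vfun {S A : Type*} [Fintype S] [Fintype A] [DecidableEq S]
    (Pk : S → A → S → ℝ) (c : S → A → ℝ) (π : S → A → ℝ) (γ : ℝ) : S → ℝ :=
  fun s => ∑' t : ℕ, γ ^ t * ∑ s', kpow (stateKer Pk π) t s s' * ∑ a, π s' a * c s' a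

/-- Q-function of a policy. -/
noncomputable def Qfun {S A : Type*} [Fintype S] [Fintype A] [DecidableEq S]
    (Pk : S → A → S → ℝ) (c : S → A → ℝ) (π : S → A → ℝ) (γ : ℝ) : S → A → ℝ :=
  fun s a => c s a + γ * ∑ s', Pk s a s' * Vfun Pk c π γ s'

/-- Discounted state visitation measure of a policy started at `s`. -/
noncomputable def dvisit {S A : Type*} [Fintype S] [Fintype A] [DecidableEq S]
    (Pk : S → A → S → ℝ) (π : S → A → ℝ) (γ : ℝ) : S → S → ℝ :=
  fun s s' => (1 - γ) * ∑' t : ℕ, γ ^ t * kpow (stateKer Pk π) t s s'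

section Aux
variable {S : Type*} [Fintype S] [DecidableEq S] {K : S → S → ℝ}

lemma kpow_nonneg (hK0 : ∀ s s', 0 ≤ K s s') : ∀ t s s', 0 ≤ kpow K t s s' := by
  intro t
  induction t with
  | zero => intro s s'; simp only [kpow]; split <;> norm_num
  | succ t ih => intro s s'; simp only [kpow]
                 exact Finset.sum_nonneg fun u _ => mul_nonneg (hK0 s u) (ih u s')

lemma kpow_row_sum (hK1 : ∀ s, ∑ s', K s s' = 1) : ∀ t s, ∑ s', kpow K t s s' = 1 := by
  intro t
  induction t with
  | zero => intro s; simp [kpow]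
  | succ t ih =>
      intro s
      simp only [kpow]
      rw [Finset.sum_comm]
      simp only [← Finset.mul_sum, ih, mul_one]
      exact hK1 s

lemma kpow_le_one (hK0 : ∀ s s', 0 ≤ K s s') (hK1 : ∀ s, ∑ s', K s s' = 1)
    (t : ℕ) (s s' : S) : kpow K t s s' ≤ 1 := by
  calc kpow K t s s' ≤ ∑ u, kpow K t s u :=
        Finset.single_le_sum (fun u _ => kpow_nonneg hK0 t s u) (Finset.mem_univ s')
    _ = 1 := kpow_row_sum hK1 t s

lemma kpow_succ_right (t : ℕ) (s s' : S) :
    kpow K (t + 1) s s' = ∑ u, kpow K t s u * K u s' := by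
  induction t generalizing s with
  | zero => simp [kpow]
  | succ t ih =>
      show ∑ u, K s u * kpow K (t+1) u s' = _
      simp only [ih, Finset.mul_sum]
      rw [Finset.sum_comm]
      refine Finset.sum_congr rfl fun u _ => ?_
      show ∑ x, K s x * (kpow K t x u * K u s') = (∑ x, K s x * kpow K t x u) * K u s'
      rw [Finset.sum_mul]
      exact Finset.sum_congr rfl fun x _ => by ring

lemma kpow_row_bound (hK0 : ∀ s s', 0 ≤ K s s') (hK1 : ∀ s, ∑ s', K s s' = 1)
    (h : S → ℝ) (t : ℕ) (s : S) :
    |∑ s', kpow K t s s' * h s'| ≤ ∑ s', |h s'| := by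
  calc |∑ s', kpow K t s s' * h s'| ≤ ∑ s', |kpow K t s s' * h s'| :=
        Finset.abs_sum_le_sum_abs _ _
    _ ≤ ∑ s', |h s'| := by
        apply Finset.sum_le_sum
        intro u _
        rw [abs_mul, abs_of_nonneg (kpow_nonneg hK0 t s u)]
        calc kpow K t s u * |h u| ≤ 1 * |h u| :=
              mul_le_mul_of_nonneg_right (kpow_le_one hK0 hK1 t s u) (abs_nonneg _)
          _ = |h u| := one_mul _

lemma summable_geom_bound {γ : ℝ} (hγ0 : 0 ≤ γ) (hγ1 : γ < 1) (b : ℕ → ℝ) (C : ℝ)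
    (hb : ∀ t, |b t| ≤ C) : Summable (fun t => γ ^ t * b t) := by
  apply Summable.of_norm_bounded (g := fun t => γ ^ t * C)
    ((summable_geometric_of_lt_one hγ0 hγ1).mul_right C)
  intro t
  rw [Real.norm_eq_abs, abs_mul, abs_pow, abs_of_nonneg hγ0]
  exact mul_le_mul_of_nonneg_left (hb t) (pow_nonneg hγ0 t)

lemma summable_kpow {γ : ℝ} (hγ0 : 0 ≤ γ) (hγ1 : γ < 1)
    (hK0 : ∀ s s', 0 ≤ K s s') (hK1 : ∀ s, ∑ s', K s s' = 1) (h : S → ℝ) (s : S) :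
    Summable (fun t => γ ^ t * ∑ s', kpow K t s s' * h s') :=
  summable_geom_bound hγ0 hγ1 _ (∑ s', |h s'|) (fun t => kpow_row_bound hK0 hK1 h t s)

lemma tsum_kernel_step {γ : ℝ} (hγ0 : 0 ≤ γ) (hγ1 : γ < 1)
    (hK0 : ∀ s s', 0 ≤ K s s') (hK1 : ∀ s, ∑ s', K s s' = 1) (h : S → ℝ) (s : S) :
    ∑' t : ℕ, γ ^ t * ∑ s', kpow K (t + 1) s s' * h s'
      = ∑ u, K s u * ∑' t : ℕ, γ ^ t * ∑ s', kpow K t u s' * h s' := by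
  have key : ∀ t : ℕ, γ ^ t * ∑ s', kpow K (t + 1) s s' * h s'
      = ∑ u, K s u * (γ ^ t * ∑ s', kpow K t u s' * h s') := by
    intro t
    show γ ^ t * ∑ s', (∑ u, K s u * kpow K t u s') * h s' = _
    rw [Finset.mul_sum]
    simp only [Finset.sum_mul, Finset.mul_sum]
    rw [Finset.sum_comm]
    congr 1; ext u; congr 1; ext v; ring
  simp only [key]
  rw [Summable.tsum_finsetSum]
  · congr 1; ext u; rw [tsum_mul_left]
  · intro u _
    exact (summable_kpow hγ0 hγ1 hK0 hK1 h u).mul_left _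

end Aux

section MDP
variable {S A : Type*} [Fintype S] [Fintype A] [DecidableEq S] [DecidableEq A]
variable (Pk : S → A → S → ℝ) (c : S → A → ℝ)

lemma stateKer_nonneg (ρ : S → A → ℝ) (hP0 : ∀ s a s', 0 ≤ Pk s a s')
    (hρ0 : ∀ s a, 0 ≤ ρ s a) (s s' : S) : 0 ≤ stateKer Pk ρ s s' :=
  Finset.sum_nonneg fun a _ => mul_nonneg (hρ0 s a) (hP0 s a s')

lemma stateKer_row_sum (ρ : S → A → ℝ) (hP1 : ∀ s a, ∑ s', Pk s a s' = 1)
    (hρ1 : ∀ s, ∑ a, ρ s a = 1) (s : S) : ∑ s', stateKer Pk ρ s s' = 1 := by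
  unfold stateKer
  rw [Finset.sum_comm]
  simp only [← Finset.mul_sum, hP1, mul_one]
  exact hρ1 s

lemma q_pairing (π : S → A → ℝ) (γ : ℝ) (ρ : S → A → ℝ) (s' : S) :
    ∑ a, Qfun Pk c π γ s' a * ρ s' a
      = (∑ a, ρ s' a * c s' a) + γ * ∑ u, stateKer Pk ρ s' u * Vfun Pk c π γ u := by
  simp only [Qfun, add_mul, Finset.sum_add_distrib]
  congr 1
  · exact Finset.sum_congr rfl fun a _ => mul_comm _ _
  · unfold stateKer
    simp only [Finset.mul_sum, Finset.sum_mul]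
    rw [Finset.sum_comm]
    exact Finset.sum_congr rfl fun a _ => Finset.sum_congr rfl fun u _ => by ring

lemma bellman (π : S → A → ℝ) (γ : ℝ)
    (hP0 : ∀ s a s', 0 ≤ Pk s a s') (hP1 : ∀ s a, ∑ s', Pk s a s' = 1)
    (hπ0 : ∀ s a, 0 ≤ π s a) (hπ1 : ∀ s, ∑ a, π s a = 1)
    (hγ0 : 0 ≤ γ) (hγ1 : γ < 1) (s : S) :
    Vfun Pk c π γ s
      = (∑ a, π s a * c s a) + γ * ∑ u, stateKer Pk π s u * Vfun Pk c π γ u := by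
  have hK0 := stateKer_nonneg Pk π hP0 hπ0
  have hK1 := stateKer_row_sum Pk π hP1 hπ1
  have hsum := summable_kpow hγ0 hγ1 hK0 hK1 (fun s' => ∑ a, π s' a * c s' a) s
  show ∑' t : ℕ, γ ^ t * ∑ s', kpow (stateKer Pk π) t s s' * ∑ a, π s' a * c s' a = _
  rw [Summable.tsum_eq_zero_add hsum]
  congr 1
  · simp [kpow]
  · have : ∀ t : ℕ, γ ^ (t + 1) * ∑ s', kpow (stateKer Pk π) (t + 1) s s' * ∑ a, π s' a * c s' a
        = γ * (γ ^ t * ∑ s', kpow (stateKer Pk π) (t + 1) s s' * ∑ a, π s' a * c s' a) := by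
      intro t; rw [pow_succ]; ring
    simp only [this]
    rw [tsum_mul_left, tsum_kernel_step hγ0 hγ1 hK0 hK1]
    rfl

end MDP

/-- performance difference lemma:
`V^{π'}(s) - V^π(s) = (1/(1-γ)) 𝔼_{s' ~ d_s^{π'}} ⟨Q^π(s',·), π'(·|s') - π(·|s')⟩`. -/
theorem performance_difference {S A : Type*} [Fintype S] [Fintype A]
    [DecidableEq S] [DecidableEq A]
    (Pk : S → A → S → ℝ) (c : S → A → ℝ) (π π' : S → A → ℝ) (γ : ℝ)
    (hP0 : ∀ s a s', 0 ≤ Pk s a s') (hP1 : ∀ s a, ∑ s', Pk s a s' = 1)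
    (hπ0 : ∀ s a, 0 ≤ π s a) (hπ1 : ∀ s, ∑ a, π s a = 1)
    (hπ'0 : ∀ s a, 0 ≤ π' s a) (hπ'1 : ∀ s, ∑ a, π' s a = 1)
    (hc0 : ∀ s a, 0 ≤ c s a) (hc1 : ∀ s a, c s a ≤ 1)
    (hγ0 : 0 < γ) (hγ1 : γ < 1) (s : S) :
    Vfun Pk c π' γ s - Vfun Pk c π γ s
      = (1 / (1 - γ)) *
        ∑ s', dvisit Pk π' γ s s' *
          ∑ a, Qfun Pk c π γ s' a * (π' s' a - π s' a) := by
  have hγ0' : (0:ℝ) ≤ γ := le_of_lt hγ0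
  have hγne : (1:ℝ) - γ ≠ 0 := by linarith
  set K' := stateKer Pk π' with hK'def
  set V := Vfun Pk c π γ with hVdef
  have hK'0 := stateKer_nonneg Pk π' hP0 hπ'0
  have hK'1 := stateKer_row_sum Pk π' hP1 hπ'1
  set g : S → ℝ := fun s' => ∑ a, Qfun Pk c π γ s' a * (π' s' a - π s' a) with hgdef
  set cp' : S → ℝ := fun s' => ∑ a, π' s' a * c s' a with hcp'def
  -- advantage decomposition
  have hg : ∀ s', g s' = cp' s' + γ * ∑ u, K' s' u * V u - V s' := by
    intro s'
    have hsplit : g s' = (∑ a, Qfun Pk c π γ s' a * π' s' a)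
        - ∑ a, Qfun Pk c π γ s' a * π s' a := by
      rw [hgdef]
      simp only [mul_sub, Finset.sum_sub_distrib]
    rw [hsplit, q_pairing, q_pairing,
      ← bellman Pk c π γ hP0 hP1 hπ0 hπ1 hγ0' hγ1 s']
  -- telescoping sequence
  set a : ℕ → ℝ := fun t => γ ^ t * ∑ s', kpow K' t s s' * V s' with hadef
  have ha : Summable a := summable_kpow hγ0' hγ1 hK'0 hK'1 V s
  have ha' : Summable (fun t => a (t + 1)) := (summable_nat_add_iff 1).mpr ha
  have ha0 : a 0 = V s := by simp [hadef, kpow]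
  have htel : ∑' t : ℕ, (a (t + 1) - a t) = -(a 0) := by
    rw [Summable.tsum_sub ha' ha]
    have := Summable.tsum_eq_zero_add ha
    rw [this]
    ring
  -- per-term identity
  have hterm : ∀ t : ℕ, γ ^ t * ∑ s', kpow K' t s s' * g s'
      = (γ ^ t * ∑ s', kpow K' t s s' * cp' s') + (a (t + 1) - a t) := by
    intro t
    have hmid : ∑ s', kpow K' t s s' * (γ * ∑ u, K' s' u * V u)
        = γ * ∑ u, kpow K' (t + 1) s u * V u := by
      simp only [kpow_succ_right, Finset.mul_sum, Finset.sum_mul]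
      rw [Finset.sum_comm]
      refine Finset.sum_congr rfl fun s' _ => ?_
      refine Finset.sum_congr rfl fun u _ => ?_
      ring
    simp only [hg, mul_sub, mul_add, Finset.sum_sub_distrib, Finset.sum_add_distrib]
    rw [hmid, hadef]
    simp only [pow_succ]
    ring
  -- rewriting the expectation as a tsum
  have hswap : ∑ s', dvisit Pk π' γ s s' * g s'
      = (1 - γ) * ∑' t : ℕ, γ ^ t * ∑ s', kpow K' t s s' * g s' := by
    have hs : ∀ s' : S, Summable (fun t : ℕ => γ ^ t * kpow K' t s s' * g s') := by
      intro s'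
      have hb : ∀ t, |kpow K' t s s' * g s'| ≤ |g s'| := by
        intro t
        rw [abs_mul, abs_of_nonneg (kpow_nonneg hK'0 t s s')]
        calc kpow K' t s s' * |g s'| ≤ 1 * |g s'| :=
              mul_le_mul_of_nonneg_right (kpow_le_one hK'0 hK'1 t s s') (abs_nonneg _)
          _ = |g s'| := one_mul _
      have := summable_geom_bound hγ0' hγ1 (fun t => kpow K' t s s' * g s') (|g s'|) hb
      simpa [mul_assoc] using this
    calc ∑ s', dvisit Pk π' γ s s' * g s'
        = ∑ s', (1 - γ) * ∑' t : ℕ, γ ^ t * kpow K' t s s' * g s' := by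
          refine Finset.sum_congr rfl fun s' _ => ?_
          show (1 - γ) * (∑' t : ℕ, γ ^ t * kpow K' t s s') * g s' = _
          rw [mul_assoc, ← tsum_mul_right]
      _ = (1 - γ) * ∑ s', ∑' t : ℕ, γ ^ t * kpow K' t s s' * g s' := by
          rw [Finset.mul_sum]
      _ = (1 - γ) * ∑' t : ℕ, ∑ s', γ ^ t * kpow K' t s s' * g s' := by
          rw [← Summable.tsum_finsetSum fun s' _ => hs s']
      _ = (1 - γ) * ∑' t : ℕ, γ ^ t * ∑ s', kpow K' t s s' * g s' := by
          congr 1; refine tsum_congr fun t => ?_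
          rw [Finset.mul_sum]
          exact Finset.sum_congr rfl fun s' _ => (mul_assoc _ _ _)
  rw [hswap, ← mul_assoc, one_div, inv_mul_cancel₀ hγne, one_mul]
  -- split the tsum
  have hsx : Summable (fun t : ℕ => γ ^ t * ∑ s', kpow K' t s s' * cp' s') :=
    summable_kpow hγ0' hγ1 hK'0 hK'1 cp' s
  have hsy : Summable (fun t : ℕ => a (t + 1) - a t) := ha'.sub ha
  calc Vfun Pk c π' γ s - V s
      = (∑' t : ℕ, γ ^ t * ∑ s', kpow K' t s s' * cp' s') + ∑' t : ℕ, (a (t + 1) - a t) := by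
        rw [htel, ha0]
        have hV' : Vfun Pk c π' γ s = ∑' t : ℕ, γ ^ t * ∑ s', kpow K' t s s' * cp' s' := rfl
        rw [hV']
        ring
    _ = ∑' t : ℕ, (γ ^ t * ∑ s', kpow K' t s s' * cp' s' + (a (t + 1) - a t)) :=
        (Summable.tsum_add hsx hsy).symm
    _ = ∑' t : ℕ, γ ^ t * ∑ s', kpow K' t s s' * g s' := by
        exact tsum_congr fun t => (hterm t).symm
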